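/- arXiv:2309.12958 — 2 statements merged into one kernel-verified Lean document; each statement's English description precedes it below -/
import Mathlib

section
/- Let a ∈ ℂ[[t]] be a formal power series of order v₀ ≥ 1. Then there exists a formal power series b of order 1 (a formal change of variable) such that a composed with b equals t^{v₀}. -/
/-- Formal composition `a ∘ b` of one-variable power series, valid (and agreeing with
the usual substitution) when `b` has zero constant term. -/
noncomputable def pcomp (a b : PowerSeries ℂ) : PowerSeries ℂ :=
  PowerSeries.mk fun n =>
    ∑ k ∈ Finset.range (n + 1), PowerSeries.coeff k a * PowerSeries.coeff n (b ^ k)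

open PowerSeries Finset in
lemma coeff_pow_lt_eq_zero {b : PowerSeries ℂ} (hb : PowerSeries.coeff 0 b = 0)
    {k n : ℕ} (h : n < k) : PowerSeries.coeff n (b ^ k) = 0 := by
  have hX : (X : PowerSeries ℂ) ∣ b := X_dvd_iff.mpr (by simpa using hb)
  exact X_pow_dvd_iff.mp (pow_dvd_pow_of_dvd hX k) n h

open PowerSeries Finset in
lemma coeff_pow_self {b : PowerSeries ℂ} (hb : PowerSeries.coeff 0 b = 0) (k : ℕ) :
    PowerSeries.coeff k (b ^ k) = (PowerSeries.coeff 1 b) ^ k := by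
  induction k with
  | zero => simp
  | succ k ih =>
    rw [pow_succ, PowerSeries.coeff_mul]
    rw [Finset.sum_eq_single (k, 1)]
    · rw [ih]; ring
    · rintro ⟨p, q⟩ hmem hne
      rw [Finset.HasAntidiagonal.mem_antidiagonal] at hmem
      rcases lt_trichotomy p k with hp | hp | hp
      · exact mul_eq_zero_of_left (coeff_pow_lt_eq_zero hb hp) _
      · exact absurd (by simp [Prod.ext_iff]; omega) hne
      · have hq : q = 0 := by omega
        subst hq; exact mul_eq_zero_of_right _ hb
    · intro h; exact absurd (Finset.HasAntidiagonal.mem_antidiagonal.mpr (by omega)) h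

open PowerSeries Finset in
lemma coeff_pow_agree {b b' : PowerSeries ℂ} {m : ℕ}
    (hb : PowerSeries.coeff 0 b = 0) (hb' : PowerSeries.coeff 0 b' = 0)
    (hagree : ∀ j < m, PowerSeries.coeff j b = PowerSeries.coeff j b') :
    ∀ (k) {n : ℕ}, n + 1 < m + k →
      PowerSeries.coeff n (b ^ k) = PowerSeries.coeff n (b' ^ k) := by
  intro k
  induction k with
  | zero => intro n _; rfl
  | succ k ih =>
    intro n hn
    rw [pow_succ, pow_succ, PowerSeries.coeff_mul, PowerSeries.coeff_mul]
    apply Finset.sum_congr rfl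
    rintro ⟨p, q⟩ hmem
    rw [Finset.HasAntidiagonal.mem_antidiagonal] at hmem
    simp only
    rcases Nat.eq_zero_or_pos q with hq | hq
    · subst hq
      rw [hb, hb', mul_zero, mul_zero]
    · rcases lt_or_ge q m with hqm | hqm
      · rw [hagree q hqm, ih (by omega)]
      · have hp : p < k := by omega
        rw [coeff_pow_lt_eq_zero hb hp, coeff_pow_lt_eq_zero hb' hp, zero_mul, zero_mul]

open PowerSeries Finset in
lemma coeff_pow_perturb {b b' : PowerSeries ℂ} {m : ℕ} {ζ : ℂ} (hm : 2 ≤ m)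
    (hb : PowerSeries.coeff 0 b = 0) (hb' : PowerSeries.coeff 0 b' = 0)
    (h1 : PowerSeries.coeff 1 b = ζ) (h1' : PowerSeries.coeff 1 b' = ζ)
    (hagree : ∀ j < m, PowerSeries.coeff j b = PowerSeries.coeff j b') :
    ∀ k : ℕ, PowerSeries.coeff (m + k) (b ^ (k + 1)) =
      PowerSeries.coeff (m + k) (b' ^ (k + 1)) +
        ((k : ℂ) + 1) * ζ ^ k * (PowerSeries.coeff m b - PowerSeries.coeff m b') := by
  intro k
  induction k with
  | zero => simp only [Nat.cast_zero, pow_zero, pow_one, zero_add, add_zero, one_mul]; ring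
  | succ k ih =>
    set F : ℕ × ℕ → ℂ := fun c =>
      PowerSeries.coeff c.1 (b ^ (k + 1)) * PowerSeries.coeff c.2 b -
        PowerSeries.coeff c.1 (b' ^ (k + 1)) * PowerSeries.coeff c.2 b' with hF
    have hsplit : ∑ c ∈ antidiagonal (m + k + 1), F c = F (m + k, 1) + F (k + 1, m) := by
      apply Finset.sum_eq_add_of_mem
      · exact Finset.HasAntidiagonal.mem_antidiagonal.mpr (by omega)
      · exact Finset.HasAntidiagonal.mem_antidiagonal.mpr (by omega)
      · simp only [Prod.mk.injEq, not_and, Ne]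
        intro h; omega
      · rintro ⟨p, q⟩ hmem ⟨hne1, hne2⟩
        rw [Finset.HasAntidiagonal.mem_antidiagonal] at hmem
        have hq1 : q ≠ 1 := fun h => hne1 (by simp [Prod.ext_iff]; omega)
        have hqm : q ≠ m := fun h => hne2 (by simp [Prod.ext_iff]; omega)
        simp only [hF]
        rcases Nat.eq_zero_or_pos q with h0 | h0
        · subst h0; rw [hb, hb']; ring
        rcases lt_or_ge q m with hlt | hge
        · rw [hagree q hlt, coeff_pow_agree hb hb' hagree (k + 1) (by omega : p + 1 < m + (k+1))]
          ring
        · have hp : p < k + 1 := by omega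
          rw [coeff_pow_lt_eq_zero hb hp, coeff_pow_lt_eq_zero hb' hp]; ring
    have eb : PowerSeries.coeff (m + k + 1) (b ^ (k + 1 + 1)) =
        ∑ c ∈ antidiagonal (m + k + 1),
          PowerSeries.coeff c.1 (b ^ (k + 1)) * PowerSeries.coeff c.2 b := by
      rw [pow_succ, PowerSeries.coeff_mul]
    have eb' : PowerSeries.coeff (m + k + 1) (b' ^ (k + 1 + 1)) =
        ∑ c ∈ antidiagonal (m + k + 1),
          PowerSeries.coeff c.1 (b' ^ (k + 1)) * PowerSeries.coeff c.2 b' := by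
      rw [pow_succ, PowerSeries.coeff_mul]
    have hdiff : PowerSeries.coeff (m + (k + 1)) (b ^ (k + 1 + 1)) -
        PowerSeries.coeff (m + (k + 1)) (b' ^ (k + 1 + 1)) = F (m + k, 1) + F (k + 1, m) := by
      rw [show m + (k + 1) = m + k + 1 by ring, eb, eb', ← Finset.sum_sub_distrib]
      exact hsplit
    simp only [hF] at hdiff
    rw [ih, h1, h1', coeff_pow_self hb, coeff_pow_self hb', h1, h1'] at hdiff
    push_cast at hdiff ⊢
    linear_combination hdiff

/-- The coefficients of the change of variable, defined by strong recursion. -/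
noncomputable def cfun (a : PowerSeries ℂ) (v₀ : ℕ) (ζ : ℂ) : ℕ → ℂ
  | 0 => 0
  | 1 => ζ
  | m + 2 =>
    -(ζ / (v₀ : ℂ)) * PowerSeries.coeff (v₀ + m + 1)
      (pcomp a (PowerSeries.mk fun j => if h : j < m + 2 then cfun a v₀ ζ j else 0))
decreasing_by exact h

open PowerSeries Finset in
theorem change_of_variable_to_monomial (a : PowerSeries ℂ) (v₀ : ℕ) (hv₀ : 1 ≤ v₀)
    (hlow : ∀ k < v₀, PowerSeries.coeff k a = 0) (hne : PowerSeries.coeff v₀ a ≠ 0) :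
    ∃ b : PowerSeries ℂ, PowerSeries.coeff 0 b = 0 ∧ PowerSeries.coeff 1 b ≠ 0 ∧
      pcomp a b = PowerSeries.X ^ v₀ := by
  obtain ⟨ζ, hζ⟩ := IsAlgClosed.exists_pow_nat_eq ((PowerSeries.coeff v₀ a)⁻¹)
    (show 0 < v₀ by omega)
  have hζne : ζ ≠ 0 := by
    intro h
    rw [h, zero_pow (by omega : v₀ ≠ 0)] at hζ
    exact hne (by simpa [_root_.inv_eq_zero] using hζ.symm)
  have hunit : PowerSeries.coeff v₀ a * ζ ^ v₀ = 1 := by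
    rw [hζ]; exact mul_inv_cancel₀ hne
  set c := cfun a v₀ ζ with hc
  set b := PowerSeries.mk c with hbdef
  have hb0 : PowerSeries.coeff 0 b = 0 := by
    rw [hbdef, PowerSeries.coeff_mk, hc, cfun]
  have hb1 : PowerSeries.coeff 1 b = ζ := by
    rw [hbdef, PowerSeries.coeff_mk, hc, cfun]
  refine ⟨b, hb0, by rw [hb1]; exact hζne, ?_⟩
  have hcomp : ∀ (b'' : PowerSeries ℂ) (n : ℕ), PowerSeries.coeff n (pcomp a b'') =
      ∑ k ∈ Finset.range (n + 1),
        PowerSeries.coeff k a * PowerSeries.coeff n (b'' ^ k) :=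
    fun _ _ => PowerSeries.coeff_mk _ _
  ext n
  rw [PowerSeries.coeff_X_pow]
  rcases lt_trichotomy n v₀ with hn | hn | hn
  · rw [hcomp, if_neg (by omega)]
    apply Finset.sum_eq_zero
    intro k hk
    rw [Finset.mem_range] at hk
    rw [hlow k (by omega), zero_mul]
  · subst hn
    rw [hcomp, if_pos rfl, Finset.sum_eq_single n]
    · rw [coeff_pow_self hb0, hb1]; exact hunit
    · intro k hk hkne
      rw [Finset.mem_range] at hk
      rw [hlow k (by omega), zero_mul]
    · intro h; exact absurd (Finset.mem_range.mpr (by omega)) h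
  · rw [if_neg (by omega)]
    obtain ⟨d, rfl⟩ : ∃ d, n = v₀ + d + 1 := ⟨n - v₀ - 1, by omega⟩
    set b' := PowerSeries.mk (fun j => if _ : j < d + 2 then c j else 0) with hb'def
    have hb'coeff : ∀ j, PowerSeries.coeff j b' =
        if _ : j < d + 2 then c j else 0 := fun j => PowerSeries.coeff_mk _ _
    have hb'0 : PowerSeries.coeff 0 b' = 0 := by
      rw [hb'coeff, dif_pos (by omega), hc, cfun]
    have hb'1 : PowerSeries.coeff 1 b' = ζ := by
      rw [hb'coeff, dif_pos (by omega), hc, cfun]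
    have hagree : ∀ j < d + 2, PowerSeries.coeff j b = PowerSeries.coeff j b' := by
      intro j hj
      rw [hb'coeff, dif_pos hj, hbdef, PowerSeries.coeff_mk]
    have hbm : PowerSeries.coeff (d + 2) b = c (d + 2) := PowerSeries.coeff_mk _ _
    have hb'm : PowerSeries.coeff (d + 2) b' = 0 := by
      rw [hb'coeff, dif_neg (by omega)]
    obtain ⟨w, hw⟩ : ∃ w, v₀ = w + 1 := ⟨v₀ - 1, by omega⟩
    have hdiff : ∑ k ∈ Finset.range (v₀ + d + 2),
        (PowerSeries.coeff k a * PowerSeries.coeff (v₀ + d + 1) (b ^ k) -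
          PowerSeries.coeff k a * PowerSeries.coeff (v₀ + d + 1) (b' ^ k)) =
        PowerSeries.coeff v₀ a * (((w : ℂ) + 1) * ζ ^ w * c (d + 2)) := by
      rw [Finset.sum_eq_single v₀]
      · have hpert := coeff_pow_perturb (by omega : 2 ≤ d + 2) hb0 hb'0 hb1 hb'1 hagree w
        rw [show v₀ + d + 1 = d + 2 + w by omega, show v₀ = w + 1 from hw, hpert,
          hbm, hb'm]
        ring
      · intro k hk hkne
        rw [Finset.mem_range] at hk
        rcases lt_or_gt_of_ne hkne with hlt | hgt
        · rw [hlow k hlt, zero_mul, zero_mul, sub_zero]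
        · rw [coeff_pow_agree hb0 hb'0 hagree k (by omega : v₀ + d + 1 + 1 < d + 2 + k)]
          ring
      · intro h; exact absurd (Finset.mem_range.mpr (by omega)) h
    have hkey : PowerSeries.coeff (v₀ + d + 1) (pcomp a b) =
        PowerSeries.coeff (v₀ + d + 1) (pcomp a b') +
          PowerSeries.coeff v₀ a * (((w : ℂ) + 1) * ζ ^ w * c (d + 2)) := by
      rw [hcomp, hcomp, ← hdiff, Finset.sum_sub_distrib]
      ring
    have hcval : c (d + 2) =
        -(ζ / (v₀ : ℂ)) * PowerSeries.coeff (v₀ + d + 1) (pcomp a b') := by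
      rw [hc, hb'def]
      rw [cfun]
    have hvc : ((v₀ : ℕ) : ℂ) = (w : ℂ) + 1 := by rw [hw]; push_cast; ring
    rw [hkey, hcval, hvc]
    have hw1 : ((w : ℂ) + 1) ≠ 0 := Nat.cast_add_one_ne_zero w
    have hz : PowerSeries.coeff v₀ a * ζ ^ (w + 1) = 1 := by rw [← hw]; exact hunit
    field_simp
    linear_combination (-(PowerSeries.coeff (v₀ + d + 1) (pcomp a b'))) * hz
end

section
/- Let α, α', β, β' ∈ ℂ and v₀, v₁ be positive integers. Suppose that for all θ ∈ ℝ, (α cos(θ v₀) + α' sin(θ v₀))^{v₁} = (β cos(θ v₁) + β' sin(θ v₁))^{v₀}. Then β α' = α β'. -/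
theorem coeff_relation_from_functional_identity (α α' β β' : ℂ) (v₀ v₁ : ℕ)
    (hv₀ : 0 < v₀) (hv₁ : 0 < v₁) (hα : α ≠ 0)
    (h : ∀ θ : ℝ,
      (α * (Real.cos (θ * v₀) : ℂ) + α' * (Real.sin (θ * v₀) : ℂ)) ^ v₁ =
      (β * (Real.cos (θ * v₁) : ℂ) + β' * (Real.sin (θ * v₁) : ℂ)) ^ v₀) :
    β * α' = α * β' := by
  -- value at 0
  have h0 : α ^ v₁ = β ^ v₀ := by
    have := h 0
    simpa using this
  -- generic derivative computation
  have hg : ∀ (a a' : ℂ) (n : ℕ),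
      HasDerivAt (fun θ : ℝ => a * (Real.cos (θ * n) : ℂ) + a' * (Real.sin (θ * n) : ℂ))
        (a' * n) 0 := by
    intro a a' n
    have hlin : HasDerivAt (fun θ : ℝ => θ * (n : ℝ)) (n : ℝ) 0 := by
      simpa using (hasDerivAt_id (0 : ℝ)).mul_const (n : ℝ)
    have hcos : HasDerivAt (fun θ : ℝ => Real.cos (θ * n)) 0 0 := by
      have := (Real.hasDerivAt_cos ((0 : ℝ) * n)).comp 0 hlin
      simpa [Function.comp_def] using this
    have hsin : HasDerivAt (fun θ : ℝ => Real.sin (θ * n)) (n : ℝ) 0 := by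
      have := (Real.hasDerivAt_sin ((0 : ℝ) * n)).comp 0 hlin
      simpa [Function.comp_def] using this
    have := ((hcos.ofReal_comp).const_mul a).add ((hsin.ofReal_comp).const_mul a')
    simpa [Pi.add_def] using this
  have hcomp : ∀ (a a' : ℂ) (n m : ℕ),
      HasDerivAt (fun θ : ℝ => (a * (Real.cos (θ * n) : ℂ) + a' * (Real.sin (θ * n) : ℂ)) ^ m)
        ((m : ℂ) * a ^ (m - 1) * (a' * n)) 0 := by
    intro a a' n m
    have hgA := hg a a' n
    have hval : a * (Real.cos ((0 : ℝ) * n) : ℂ) + a' * (Real.sin ((0 : ℝ) * n) : ℂ) = a := by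
      simp
    have hp : HasDerivAt (fun z : ℂ => z ^ m) ((m : ℂ) * a ^ (m - 1))
        (a * (Real.cos ((0 : ℝ) * n) : ℂ) + a' * (Real.sin ((0 : ℝ) * n) : ℂ)) := by
      rw [hval]; exact hasDerivAt_pow m a
    have := HasDerivAt.comp (0 : ℝ) hp hgA
    simpa [Function.comp_def, mul_assoc] using this
  have hA := hcomp α α' v₀ v₁
  have hB := hcomp β β' v₁ v₀
  have hfun : (fun θ : ℝ => (α * (Real.cos (θ * v₀) : ℂ) + α' * (Real.sin (θ * v₀) : ℂ)) ^ v₁)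
      = (fun θ : ℝ => (β * (Real.cos (θ * v₁) : ℂ) + β' * (Real.sin (θ * v₁) : ℂ)) ^ v₀) :=
    funext h
  rw [← hfun] at hB
  have key := hA.unique hB
  -- key : ↑v₁ * α ^ (v₁ - 1) * (α' * ↑v₀) = ↑v₀ * β ^ (v₀ - 1) * (β' * ↑v₁)
  have hv0 : ((v₀ : ℂ)) ≠ 0 := Nat.cast_ne_zero.mpr hv₀.ne'
  have hv1 : ((v₁ : ℂ)) ≠ 0 := Nat.cast_ne_zero.mpr hv₁.ne'
  have key2 : α ^ (v₁ - 1) * α' = β ^ (v₀ - 1) * β' := by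
    have hc : ((v₀ : ℂ)) * (v₁ : ℂ) ≠ 0 := mul_ne_zero hv0 hv1
    apply mul_left_cancel₀ hc
    linear_combination key
  have hpow : α ^ v₁ = α ^ (v₁ - 1) * α := by
    conv_lhs => rw [show v₁ = (v₁ - 1) + 1 from (Nat.succ_pred_eq_of_pos hv₁).symm]
    rw [pow_succ]
  have hpow' : β ^ v₀ = β ^ (v₀ - 1) * β := by
    conv_lhs => rw [show v₀ = (v₀ - 1) + 1 from (Nat.succ_pred_eq_of_pos hv₀).symm]
    rw [pow_succ]
  have ha : α ^ (v₁ - 1) ≠ 0 := pow_ne_zero _ hα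
  apply mul_left_cancel₀ ha
  calc α ^ (v₁ - 1) * (β * α') = β * (α ^ (v₁ - 1) * α') := by ring
    _ = β * (β ^ (v₀ - 1) * β') := by rw [key2]
    _ = β ^ v₀ * β' := by rw [hpow']; ring
    _ = α ^ v₁ * β' := by rw [h0]
    _ = α ^ (v₁ - 1) * (α * β') := by rw [hpow]; ring
end
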